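/- Let u₁, u₂, u₃ be three distinct unit vectors in ℝ² (equivalently, coplanar unit vectors in ℝ³ with common starting point) such that the three angles between consecutive vectors sum to 2π (i.e. the vectors are not all contained in an open half-plane). Then ‖u₁ + u₂ + u₃‖ ≤ 1. -/

import Mathlib

open scoped RealInnerProductSpace

/-- Three distinct unit vectors in the plane which are not all contained in an
open half-plane (equivalently, the angles between consecutive vectors sum to
`2π`) have a sum of norm at most 1. -/
theorem norm_sum_three_unit_vectors_le_one
    (u : Fin 3 → EuclideanSpace ℝ (Fin 2))
    (hunit : ∀ i, ‖u i‖ = 1)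
    (hdist : ∀ i j, i ≠ j → u i ≠ u j)
    (hhalf : ∀ v : EuclideanSpace ℝ (Fin 2), v ≠ 0 → ∃ i, ⟪v, u i⟫ ≤ 0) :
    ‖u 0 + u 1 + u 2‖ ≤ 1 := by
  -- Step 1: 0 is in the convex hull of the `u i`.
  have hmem : (0 : EuclideanSpace ℝ (Fin 2)) ∈ convexHull ℝ (Set.range u) := by
    by_contra h0
    obtain ⟨f, c, hfc, hc⟩ :=
      geometric_hahn_banach_point_closed (convex_convexHull ℝ _)
        (((Set.finite_range u).isCompact_convexHull (𝕜 := ℝ)).isClosed) h0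
    have hf0 : f 0 = 0 := map_zero f
    set v := (InnerProductSpace.toDual ℝ (EuclideanSpace ℝ (Fin 2))).symm f with hv
    have hvne : v ≠ 0 := by
      intro hveq
      have : f = 0 := by
        have := congrArg (InnerProductSpace.toDual ℝ (EuclideanSpace ℝ (Fin 2))) hveq
        simpa [hv] using this
      have h1 := hc (u 0) (subset_convexHull ℝ _ ⟨0, rfl⟩)
      rw [this] at h1
      simp at h1
      linarith [hfc, hf0, h1]
    obtain ⟨i, hi⟩ := hhalf v hvne
    have : c < f (u i) := hc (u i) (subset_convexHull ℝ _ ⟨i, rfl⟩)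
    have : (0 : ℝ) < f (u i) := by linarith [hfc]
    rw [← InnerProductSpace.toDual_symm_apply (𝕜 := ℝ)] at this
    exact absurd hi (not_le.mpr this)
  -- Step 2: extract convex combination weights.
  rw [convexHull_range_eq_exists_affineCombination] at hmem
  obtain ⟨s, w₀, hw₀, hw₁, hwc⟩ := hmem
  rw [Finset.affineCombination_eq_linear_combination s u w₀ hw₁] at hwc
  set w : Fin 3 → ℝ := fun i => if i ∈ s then w₀ i else 0 with hw
  have hwnn : ∀ i, 0 ≤ w i := by
    intro i; by_cases hi : i ∈ s <;> simp [hw, hi, hw₀ i]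
  have hwsum : ∑ i, w i = 1 := by
    rw [← hw₁]
    rw [Finset.sum_ite_mem, Finset.univ_inter]
  have hwz : ∑ i, w i • u i = 0 := by
    rw [← hwc]
    simp only [hw, ite_smul, zero_smul]
    rw [Finset.sum_ite_mem, Finset.univ_inter]
  -- Step 3: pick the largest weight.
  obtain ⟨i₀, -, hmax⟩ := Finset.exists_max_image Finset.univ w ⟨0, Finset.mem_univ 0⟩
  set c := w i₀ with hcdef
  have hmax' : ∀ i, w i ≤ c := fun i => hmax i (Finset.mem_univ i)
  have hcpos : 0 < c := by
    by_contra hcle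
    push_neg at hcle
    have : (1 : ℝ) ≤ 0 := by
      rw [← hwsum]
      calc ∑ i, w i ≤ ∑ _i : Fin 3, (0 : ℝ) :=
            Finset.sum_le_sum fun i _ => le_trans (hmax' i) hcle
        _ = 0 := by simp
    linarith
  -- c ≤ 1 - c
  have hchalf : c ≤ 1 - c := by
    have key : c • u i₀ = -∑ i ∈ Finset.univ.erase i₀, w i • u i := by
      have := Finset.add_sum_erase Finset.univ (fun i => w i • u i) (Finset.mem_univ i₀)
      rw [hwz] at this
      rw [hcdef]
      linear_combination (norm := module) this
    have h1 : ‖c • u i₀‖ = c := by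
      rw [norm_smul, hunit i₀, Real.norm_eq_abs, abs_of_pos hcpos, mul_one]
    have h2 : ‖∑ i ∈ Finset.univ.erase i₀, w i • u i‖ ≤ ∑ i ∈ Finset.univ.erase i₀, w i := by
      refine le_trans (norm_sum_le _ _) (le_of_eq ?_)
      refine Finset.sum_congr rfl fun i _ => ?_
      rw [norm_smul, hunit i, Real.norm_eq_abs, abs_of_nonneg (hwnn i), mul_one]
    have h3 : ∑ i ∈ Finset.univ.erase i₀, w i = 1 - c := by
      have := Finset.add_sum_erase Finset.univ w (Finset.mem_univ i₀)
      rw [hwsum] at this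
      linarith [this]
    calc c = ‖c • u i₀‖ := h1.symm
      _ = ‖∑ i ∈ Finset.univ.erase i₀, w i • u i‖ := by rw [key, norm_neg]
      _ ≤ 1 - c := by rw [← h3]; exact h2
  -- Step 4: main estimate.
  have hrepr : c • (u 0 + u 1 + u 2) = ∑ i, (c - w i) • u i := by
    have h1 : ∑ i, (c - w i) • u i = c • (∑ i, u i) - ∑ i, w i • u i := by
      rw [Finset.smul_sum, ← Finset.sum_sub_distrib]
      exact Finset.sum_congr rfl fun i _ => by rw [sub_smul]
    rw [h1, hwz, sub_zero, Fin.sum_univ_three]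
  have hbound : c * ‖u 0 + u 1 + u 2‖ ≤ 3 * c - 1 := by
    calc c * ‖u 0 + u 1 + u 2‖ = ‖c • (u 0 + u 1 + u 2)‖ := by
          rw [norm_smul, Real.norm_eq_abs, abs_of_pos hcpos]
      _ = ‖∑ i, (c - w i) • u i‖ := by rw [hrepr]
      _ ≤ ∑ i, ‖(c - w i) • u i‖ := norm_sum_le _ _
      _ = ∑ i, (c - w i) := by
          refine Finset.sum_congr rfl fun i _ => ?_
          rw [norm_smul, hunit i, Real.norm_eq_abs,
            abs_of_nonneg (sub_nonneg.mpr (hmax' i)), mul_one]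
      _ = 3 * c - 1 := by
          rw [Finset.sum_sub_distrib, hwsum, Finset.sum_const, Finset.card_univ,
            Fintype.card_fin, nsmul_eq_mul]
          push_cast
          ring
  have : c * ‖u 0 + u 1 + u 2‖ ≤ c * 1 := by
    rw [mul_one]; linarith
  exact le_of_mul_le_mul_left this hcpos
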